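/- arXiv:1808.03610 — 4 statements merged into one kernel-verified Lean document; each statement's English description precedes it below -/
import Mathlib

section
/- Fix real t < T and x, set τ = T − t, and let f(σ) = BS(t,x,x,σ) for σ > 0, with inverse function g : (0, e^x) → (0,∞). Then for every v ∈ (0, e^x), g is twice differentiable at v with g″(v) = g(v) / (4 · (e^x · φ(g(v)·√τ/2))²). -/
open Real MeasureTheory Filter Set
open scoped Topology

/-- Standard normal cumulative distribution function. -/
noncomputable def stdNormalCDF (z : ℝ) : ℝ :=
  ∫ u in Set.Iic z, Real.exp (-u ^ 2 / 2) / Real.sqrt (2 * Real.pi)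

/-- Standard normal density. -/
noncomputable def stdNormalPDF (z : ℝ) : ℝ :=
  Real.exp (-z ^ 2 / 2) / Real.sqrt (2 * Real.pi)

/-- d₊ in the Black–Scholes formula (maturity `T`, time `t`, log-spot `x`, log-strike `k`). -/
noncomputable def dplus (T t x k σ : ℝ) : ℝ :=
  (x - k) / (σ * Real.sqrt (T - t)) + σ * Real.sqrt (T - t) / 2

/-- d₋ in the Black–Scholes formula. -/
noncomputable def dminus (T t x k σ : ℝ) : ℝ :=
  (x - k) / (σ * Real.sqrt (T - t)) - σ * Real.sqrt (T - t) / 2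

/-- Black–Scholes call price with time to maturity `T - t`, log-spot `x`,
log-strike `k` and volatility `σ`. -/
noncomputable def BS (T t x k σ : ℝ) : ℝ :=
  Real.exp x * stdNormalCDF (dplus T t x k σ) - Real.exp k * stdNormalCDF (dminus T t x k σ)

lemma stdNormalPDF_continuous : Continuous stdNormalPDF := by
  unfold stdNormalPDF; fun_prop

lemma stdNormalPDF_pos (z : ℝ) : 0 < stdNormalPDF z :=
  div_pos (exp_pos _) (sqrt_pos.2 (by positivity))

lemma stdNormalPDF_neg (z : ℝ) : stdNormalPDF (-z) = stdNormalPDF z := by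
  simp [stdNormalPDF, neg_sq]

lemma integrableOn_pdf (z : ℝ) :
    IntegrableOn (fun u : ℝ => Real.exp (-u ^ 2 / 2) / Real.sqrt (2 * Real.pi)) (Iic z) := by
  have h : Integrable (fun u : ℝ => Real.exp (-(1/2) * u ^ 2)) :=
    integrable_exp_neg_mul_sq (by norm_num)
  have h2 : (fun u : ℝ => Real.exp (-u ^ 2 / 2) / Real.sqrt (2 * Real.pi)) =
      fun u : ℝ => Real.exp (-(1/2) * u ^ 2) / Real.sqrt (2 * Real.pi) := by
    funext u; ring_nf
  rw [h2]
  exact (h.div_const _).integrableOn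

lemma stdNormalCDF_eq (z : ℝ) :
    stdNormalCDF z = stdNormalCDF 0 + ∫ u in (0:ℝ)..z, stdNormalPDF u := by
  unfold stdNormalCDF stdNormalPDF
  rw [← intervalIntegral.integral_Iic_sub_Iic (integrableOn_pdf 0) (integrableOn_pdf z)]
  ring

lemma hasStrictDerivAt_CDF (z : ℝ) : HasStrictDerivAt stdNormalCDF (stdNormalPDF z) z := by
  have h := stdNormalPDF_continuous.integral_hasStrictDerivAt 0 z
  have he : stdNormalCDF = fun w => stdNormalCDF 0 + ∫ u in (0:ℝ)..w, stdNormalPDF u :=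
    funext stdNormalCDF_eq
  rw [he]
  simpa using h

lemma BS_atm (T t x σ : ℝ) : BS T t x x σ =
    Real.exp x * stdNormalCDF (σ * Real.sqrt (T - t) / 2) -
      Real.exp x * stdNormalCDF (-(σ * Real.sqrt (T - t) / 2)) := by
  unfold BS dplus dminus
  rw [sub_self, zero_div, zero_add, zero_sub]

lemma hasStrictDerivAt_BS (T t x σ : ℝ) :
    HasStrictDerivAt (fun σ => BS T t x x σ)
      (Real.exp x * Real.sqrt (T - t) * stdNormalPDF (σ * Real.sqrt (T - t) / 2)) σ := by
  set s := Real.sqrt (T - t) with hs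
  have hinner1 : HasStrictDerivAt (fun σ : ℝ => σ * s / 2) (s / 2) σ := by
    simpa using ((hasStrictDerivAt_id σ).mul_const s).div_const 2
  have hinner2 : HasStrictDerivAt (fun σ : ℝ => -(σ * s / 2)) (-(s / 2)) σ := hinner1.neg
  have h1 := ((hasStrictDerivAt_CDF (σ * s / 2)).comp σ hinner1).const_mul (Real.exp x)
  have h2 := ((hasStrictDerivAt_CDF (-(σ * s / 2))).comp σ hinner2).const_mul (Real.exp x)
  have h := h1.sub h2
  have hBS : HasStrictDerivAt (fun σ => BS T t x x σ)
      (Real.exp x * (stdNormalPDF (σ * s / 2) * (s / 2)) -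
        Real.exp x * (stdNormalPDF (-(σ * s / 2)) * -(s / 2))) σ := by
    simp only [BS_atm]
    exact h
  convert hBS using 1
  rw [stdNormalPDF_neg]
  ring

/-- the inverse `g = BS⁻¹` of the at-the-money price is twice
differentiable on `(0, e^x)` with `g″(v) = g(v)/(4 (e^x φ(g(v)√τ/2))²)`. -/
theorem BS_inv_deriv2 (T t x : ℝ) (ht : t < T) (g : ℝ → ℝ)
    (hg_left : ∀ σ : ℝ, 0 < σ → g (BS T t x x σ) = σ)
    (hg_right : ∀ v ∈ Set.Ioo (0 : ℝ) (Real.exp x), 0 < g v ∧ BS T t x x (g v) = v) :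
    ∀ v ∈ Set.Ioo (0 : ℝ) (Real.exp x),
      DifferentiableAt ℝ g v ∧
      HasDerivAt (deriv g)
        (g v / (4 * (Real.exp x * stdNormalPDF (g v * Real.sqrt (T - t) / 2)) ^ 2)) v := by
  
  set s := Real.sqrt (T - t) with hs
  have hspos : 0 < s := Real.sqrt_pos.2 (by linarith)
  have key : ∀ v ∈ Set.Ioo (0 : ℝ) (Real.exp x),
      HasDerivAt g ((Real.exp x * s * stdNormalPDF (g v * s / 2))⁻¹) v := by
    intro v hv
    obtain ⟨hgv, hfv⟩ := hg_right v hv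
    have hf := hasStrictDerivAt_BS T t x (g v)
    have hf' : Real.exp x * s * stdNormalPDF (g v * s / 2) ≠ 0 := by
      have := stdNormalPDF_pos (g v * s / 2); positivity
    have hFD := hf.hasStrictFDerivAt_equiv hf'
    have hli : HasStrictDerivAt (hf.localInverse _ _ _ hf')
        (Real.exp x * s * stdNormalPDF (g v * s / 2))⁻¹ v := by
      have := hf.to_localInverse hf'
      simpa [hfv] using this
    have hcont : ContinuousAt (hf.localInverse _ _ _ hf') v := hli.hasDerivAt.continuousAt
    have hliv : hf.localInverse _ _ _ hf' v = g v := by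
      have h0 := hFD.localInverse_apply_image
      simp only [hfv] at h0
      exact h0
    have hev1 : ∀ᶠ y in 𝓝 v, BS T t x x (hf.localInverse _ _ _ hf' y) = y := by
      have h0 := hFD.eventually_right_inverse
      simp only [hfv] at h0
      exact h0
    have hev2 : ∀ᶠ y in 𝓝 v, 0 < hf.localInverse _ _ _ hf' y :=
      hcont.eventually (eventually_gt_nhds (by rw [hliv]; exact hgv))
    have hgli : g =ᶠ[𝓝 v] hf.localInverse _ _ _ hf' := by
      filter_upwards [hev1, hev2] with y h1 h2
      rw [← h1, hg_left _ h2, h1]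
    exact hli.hasDerivAt.congr_of_eventuallyEq hgli
  intro v hv
  have hd := key v hv
  refine ⟨hd.differentiableAt, ?_⟩
  have hev : deriv g =ᶠ[𝓝 v]
      fun y => (Real.exp x * s * stdNormalPDF (g y * s / 2))⁻¹ := by
    filter_upwards [isOpen_Ioo.mem_nhds hv] with y hy
    exact (key y hy).deriv
  -- derivative of the explicit formula
  have hpdf : ∀ z : ℝ, HasDerivAt stdNormalPDF (-z * stdNormalPDF z) z := by
    intro z
    have hinner : HasDerivAt (fun z : ℝ => -z ^ 2 / 2) (-z) z := by
      have h0 : HasDerivAt (fun z : ℝ => -z ^ 2 / 2) (-(((2:ℕ):ℝ) * z ^ (2 - 1)) / 2) z :=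
        ((hasDerivAt_pow 2 z).neg).div_const 2
      refine h0.congr_deriv ?_
      norm_num
      ring
    have h := (hinner.exp).div_const (Real.sqrt (2 * Real.pi))
    unfold stdNormalPDF
    refine h.congr_deriv ?_
    ring
  have hz : HasDerivAt (fun y => g y * s / 2)
      ((Real.exp x * s * stdNormalPDF (g v * s / 2))⁻¹ * s / 2) v :=
    (hd.mul_const s).div_const 2
  have hcomp := ((hpdf (g v * s / 2)).comp v hz).const_mul (Real.exp x * s)
  have hne : Real.exp x * s * stdNormalPDF (g v * s / 2) ≠ 0 := by
    have := stdNormalPDF_pos (g v * s / 2); positivity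
  have hinv := hcomp.inv hne
  refine hinv.congr_of_eventuallyEq hev |>.congr_deriv ?_
  have hφ := stdNormalPDF_pos (g v * s / 2)
  simp only [Function.comp_apply]
  field_simp
  ring
end

section
/- For every H ∈ (0, 1/2) and every β ≥ 0, the limit lim_{T→0⁺} (1/T^{1+H}) · √( ∫_0^T ( ∫_s^T e^{−β(u−s)} (u−s)^{H−1/2} du )² ds ) exists and equals 1 / ((H + 1/2) · √(2H + 2)); in particular the limit does not depend on β. -/
open Real MeasureTheory Filter Set

/-- for `H ∈ (0,1/2)` and `β ≥ 0`,
`(1/T^{1+H}) √(∫₀^T (∫ₛ^T e^{−β(u−s)} (u−s)^{H−1/2} du)² ds) → 1/((H+1/2)√(2H+2))`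
as `T → 0⁺`; in particular the limit does not depend on `β`. -/
theorem rough_kernel_atm_level_exp (H β : ℝ) (hH1 : 0 < H) (hH2 : H < 1 / 2)
    (hβ : 0 ≤ β) :
    Filter.Tendsto
      (fun T : ℝ =>
        (1 / T ^ (1 + H)) *
          Real.sqrt (∫ s in (0:ℝ)..T,
            (∫ u in s..T, Real.exp (-β * (u - s)) * (u - s) ^ (H - 1 / 2)) ^ 2))
      (nhdsWithin 0 (Set.Ioi 0))
      (nhds (1 / ((H + 1 / 2) * Real.sqrt (2 * H + 2)))) := by
  have hr : (-1:ℝ) < H - 1/2 := by linarith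
  have hp : (0:ℝ) < H + 1/2 := by linarith
  have h2H2 : (0:ℝ) < 2*H + 2 := by linarith
  set c : ℝ := 1 / ((H + 1/2) * Real.sqrt (2*H + 2)) with hcdef
  have hcnn : 0 ≤ c := by
    apply div_nonneg zero_le_one
    exact mul_nonneg hp.le (Real.sqrt_nonneg _)
  set g : ℝ → ℝ := fun v => Real.exp (-β * v) * v ^ (H - 1/2) with hgdef
  have hgint : ∀ a b : ℝ, IntervalIntegrable g volume a b := fun a b =>
    (intervalIntegral.intervalIntegrable_rpow' hr).continuousOn_mul
      (Continuous.continuousOn (by continuity))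
  set F : ℝ → ℝ := fun x => ∫ v in (0:ℝ)..x, g v with hFdef
  have hFcont : Continuous F := intervalIntegral.continuous_primitive hgint 0
  have hinner : ∀ s T : ℝ, (∫ u in s..T, Real.exp (-β*(u-s)) * (u-s)^(H-1/2)) = F (T - s) := by
    intro s T
    have := intervalIntegral.integral_comp_sub_right (a := s) (b := T) g s
    simpa [hFdef, hgdef, sub_self] using this
  have hrpow_int : ∀ x : ℝ, 0 ≤ x → (∫ v in (0:ℝ)..x, v ^ (H - 1/2)) = x ^ (H+1/2) / (H+1/2) := by
    intro x hx
    rw [integral_rpow (Or.inl hr), Real.zero_rpow (by linarith : H - 1/2 + 1 ≠ 0)]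
    rw [show H - 1/2 + 1 = H + 1/2 by ring]
    ring
  have hFub : ∀ T x : ℝ, 0 ≤ x → x ≤ T → F x ≤ x ^ (H+1/2) / (H+1/2) := by
    intro T x hx0 hxT
    rw [← hrpow_int x hx0, hFdef]
    refine intervalIntegral.integral_mono_on hx0 (hgint 0 x)
      (intervalIntegral.intervalIntegrable_rpow' hr) ?_
    intro v hv
    have hv0 : 0 ≤ v := hv.1
    have : Real.exp (-β * v) ≤ 1 := Real.exp_le_one_iff.2 (by nlinarith)
    calc Real.exp (-β * v) * v ^ (H - 1/2) ≤ 1 * v ^ (H - 1/2) :=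
          mul_le_mul_of_nonneg_right this (Real.rpow_nonneg hv0 _)
      _ = v ^ (H - 1/2) := one_mul _
  have hFlb : ∀ T x : ℝ, 0 ≤ x → x ≤ T → Real.exp (-β * T) * (x ^ (H+1/2) / (H+1/2)) ≤ F x := by
    intro T x hx0 hxT
    rw [← hrpow_int x hx0, ← intervalIntegral.integral_const_mul, hFdef]
    refine intervalIntegral.integral_mono_on hx0
      ((intervalIntegral.intervalIntegrable_rpow' hr).const_mul _) (hgint 0 x) ?_
    intro v hv
    have hv0 : 0 ≤ v := hv.1
    have hvT : v ≤ T := le_trans hv.2 hxT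
    have : Real.exp (-β * T) ≤ Real.exp (-β * v) := by
      apply Real.exp_le_exp.2
      nlinarith
    exact mul_le_mul_of_nonneg_right this (Real.rpow_nonneg hv0 _)
  have hFnn : ∀ T x : ℝ, 0 ≤ x → x ≤ T → 0 ≤ F x := by
    intro T x hx0 hxT
    refine le_trans ?_ (hFlb T x hx0 hxT)
    positivity
  have hJ : ∀ T : ℝ, 0 < T →
      (∫ s in (0:ℝ)..T, ((T - s) ^ (H+1/2) / (H+1/2)) ^ 2)
        = (T ^ (H+1) * c) ^ 2 := by
    intro T hT
    have h1 : (∫ s in (0:ℝ)..T, ((T - s) ^ (H+1/2) / (H+1/2)) ^ 2)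
        = (∫ s in (0:ℝ)..T, ((T - s) ^ (H+1/2)) ^ 2) / (H+1/2)^2 := by
      simp only [div_pow]
      rw [intervalIntegral.integral_div]
    have h2 : (∫ s in (0:ℝ)..T, ((T - s) ^ (H+1/2)) ^ 2)
        = ∫ v in (0:ℝ)..T, (v ^ (H+1/2)) ^ 2 := by
      have := intervalIntegral.integral_comp_sub_left (a := (0:ℝ)) (b := T)
        (fun v => (v ^ (H+1/2)) ^ 2) T
      simpa using this
    have h3 : (∫ v in (0:ℝ)..T, (v ^ (H+1/2)) ^ 2) = ∫ v in (0:ℝ)..T, v ^ (2*H+1) := by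
      refine intervalIntegral.integral_congr ?_
      intro v hv
      rw [Set.uIcc_of_le hT.le] at hv
      have hv0 : 0 ≤ v := hv.1
      show (v ^ (H+1/2)) ^ 2 = v ^ (2*H+1)
      rw [show (2*H+1 : ℝ) = (H+1/2) * (2:ℕ) by push_cast; ring,
        Real.rpow_mul hv0, Real.rpow_natCast]
    have h4 : (∫ v in (0:ℝ)..T, v ^ (2*H+1)) = T ^ (2*H+2) / (2*H+2) := by
      rw [integral_rpow (Or.inl (by linarith : (-1:ℝ) < 2*H+1)),
        Real.zero_rpow (by linarith : 2*H+1+1 ≠ 0),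
        show (2*H+1+1 : ℝ) = 2*H+2 by ring]
      ring
    rw [h1, h2, h3, h4]
    have hTsq : (T ^ (H+1)) ^ 2 = T ^ (2*H+2) := by
      rw [← Real.rpow_natCast (T ^ (H+1)) 2, ← Real.rpow_mul hT.le]
      push_cast
      ring_nf
    have hs : Real.sqrt (2*H+2) ^ 2 = 2*H+2 := Real.sq_sqrt h2H2.le
    rw [mul_pow, hTsq, hcdef]
    rw [div_pow, mul_pow, hs, one_pow]
    have hsne : Real.sqrt (2*H+2) ≠ 0 := by positivity
    field_simp
  have hmain : ∀ T : ℝ, 0 < T →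
      Real.exp (-β * T) * c ≤
        (1 / T ^ (1 + H)) * Real.sqrt (∫ s in (0:ℝ)..T,
          (∫ u in s..T, Real.exp (-β * (u - s)) * (u - s) ^ (H - 1 / 2)) ^ 2) ∧
      (1 / T ^ (1 + H)) * Real.sqrt (∫ s in (0:ℝ)..T,
          (∫ u in s..T, Real.exp (-β * (u - s)) * (u - s) ^ (H - 1 / 2)) ^ 2) ≤ c := by
    intro T hT
    have hrw : (∫ s in (0:ℝ)..T,
        (∫ u in s..T, Real.exp (-β * (u - s)) * (u - s) ^ (H - 1 / 2)) ^ 2)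
        = ∫ s in (0:ℝ)..T, (F (T - s)) ^ 2 := by
      refine intervalIntegral.integral_congr fun s _ => ?_
      show (∫ u in s..T, Real.exp (-β * (u - s)) * (u - s) ^ (H - 1 / 2)) ^ 2 = (F (T - s)) ^ 2
      rw [hinner]
    rw [hrw]
    set I : ℝ := ∫ s in (0:ℝ)..T, (F (T - s)) ^ 2 with hIdef
    have hints : IntervalIntegrable (fun s => (F (T - s)) ^ 2) volume 0 T :=
      (((hFcont.comp (continuous_const.sub continuous_id)).pow 2)).intervalIntegrable 0 T
    have hcontpow : Continuous fun s : ℝ => ((T - s) ^ (H+1/2) / (H+1/2)) ^ 2 :=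
      ((((Real.continuous_rpow_const (by linarith : (0:ℝ) ≤ H+1/2)).comp
        (continuous_const.sub continuous_id)).div_const _).pow 2)
    have hIub : I ≤ (T ^ (H+1) * c) ^ 2 := by
      rw [← hJ T hT, hIdef]
      refine intervalIntegral.integral_mono_on hT.le hints
        (hcontpow.intervalIntegrable 0 T) ?_
      intro s hs
      have hx0 : 0 ≤ T - s := by linarith [hs.2]
      have hxT : T - s ≤ T := by linarith [hs.1]
      exact pow_le_pow_left₀ (hFnn T _ hx0 hxT) (hFub T _ hx0 hxT) 2
    have hIlb : (Real.exp (-β * T) * (T ^ (H+1) * c)) ^ 2 ≤ I := by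
      have hlbint : (∫ s in (0:ℝ)..T,
          (Real.exp (-β * T) * ((T - s) ^ (H+1/2) / (H+1/2))) ^ 2)
          = (Real.exp (-β * T) * (T ^ (H+1) * c)) ^ 2 := by
        have heq : (∫ s in (0:ℝ)..T,
            (Real.exp (-β * T) * ((T - s) ^ (H+1/2) / (H+1/2))) ^ 2)
            = Real.exp (-β * T) ^ 2 * ∫ s in (0:ℝ)..T, ((T - s) ^ (H+1/2) / (H+1/2)) ^ 2 := by
          rw [← intervalIntegral.integral_const_mul]
          refine intervalIntegral.integral_congr fun s _ => ?_
          show (Real.exp (-β * T) * ((T - s) ^ (H+1/2) / (H+1/2))) ^ 2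
            = Real.exp (-β * T) ^ 2 * ((T - s) ^ (H+1/2) / (H+1/2)) ^ 2
          ring
        rw [heq, hJ T hT]; ring
      rw [← hlbint, hIdef]
      have hcont2 : Continuous fun s : ℝ =>
          (Real.exp (-β * T) * ((T - s) ^ (H+1/2) / (H+1/2))) ^ 2 :=
        ((continuous_const.mul (((Real.continuous_rpow_const hp.le).comp
          (continuous_const.sub continuous_id)).div_const _)).pow 2)
      refine intervalIntegral.integral_mono_on hT.le (hcont2.intervalIntegrable 0 T) hints ?_
      intro s hs
      have hx0 : 0 ≤ T - s := by linarith [hs.2]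
      have hxT : T - s ≤ T := by linarith [hs.1]
      have hb := hFlb T (T - s) hx0 hxT
      have hnn : 0 ≤ Real.exp (-β * T) * ((T - s) ^ (H+1/2) / (H+1/2)) := by positivity
      exact pow_le_pow_left₀ hnn hb 2
    have hTpow : (0:ℝ) < T ^ (H+1) := Real.rpow_pos_of_pos hT _
    have hApos : (0:ℝ) < T ^ (1+H) := Real.rpow_pos_of_pos hT _
    have h1H : T ^ (1+H) = T ^ (H+1) := by rw [add_comm]
    have hAne : T ^ (H+1) ≠ 0 := hTpow.ne'
    have hsub : Real.sqrt I ≤ T ^ (H+1) * c := by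
      have := Real.sqrt_le_sqrt hIub
      rwa [Real.sqrt_sq (by positivity)] at this
    have hslb : Real.exp (-β * T) * (T ^ (H+1) * c) ≤ Real.sqrt I := by
      have := Real.sqrt_le_sqrt hIlb
      rwa [Real.sqrt_sq (by positivity)] at this
    constructor
    · calc Real.exp (-β * T) * c
          = (1 / T ^ (1+H)) * (Real.exp (-β * T) * (T ^ (H+1) * c)) := by
            rw [h1H]; field_simp
        _ ≤ (1 / T ^ (1+H)) * Real.sqrt I :=
            mul_le_mul_of_nonneg_left hslb (by positivity)
    · calc (1 / T ^ (1+H)) * Real.sqrt I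
          ≤ (1 / T ^ (1+H)) * (T ^ (H+1) * c) :=
            mul_le_mul_of_nonneg_left hsub (by positivity)
        _ = c := by rw [h1H]; field_simp
  have hlim : Tendsto (fun T : ℝ => Real.exp (-β * T) * c) (nhdsWithin 0 (Set.Ioi 0)) (nhds c) := by
    have h0 : Tendsto (fun T : ℝ => Real.exp (-β * T) * c) (nhds 0)
        (nhds (Real.exp (-β * 0) * c)) :=
      Continuous.tendsto ((Real.continuous_exp.comp (continuous_const.mul continuous_id)).mul continuous_const) 0
    simpa using h0.mono_left nhdsWithin_le_nhds
  refine tendsto_of_tendsto_of_tendsto_of_le_of_le' hlim tendsto_const_nhds ?_ ?_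
  · filter_upwards [self_mem_nhdsWithin] with T hT using (hmain T hT).1
  · filter_upwards [self_mem_nhdsWithin] with T hT using (hmain T hT).2
end

section
/- Let H ∈ (0, 1/2), Δ > 0, and let g : [0,∞) → ℝ be continuous and bounded. Then lim_{T→0⁺} (1/√T) · √( ∫_0^T ( ∫_T^{T+Δ} (r−s)^{H−1/2} g(r−s) dr )² ds ) = | ∫_0^Δ u^{H−1/2} g(u) du |. -/
open Real MeasureTheory Filter Set

set_option maxHeartbeats 1000000

/-- for `H ∈ (0,1/2)`, `Δ > 0` and `g` continuous and bounded on `[0,∞)`,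
`(1/√T) √(∫₀^T (∫_T^{T+Δ} (r−s)^{H−1/2} g(r−s) dr)² ds) → |∫₀^Δ u^{H−1/2} g(u) du|`
as `T → 0⁺`. -/
theorem VIX_kernel_atm_level (H Δ : ℝ) (hH1 : 0 < H) (hH2 : H < 1 / 2) (hΔ : 0 < Δ)
    (g : ℝ → ℝ) (hg_cont : ContinuousOn g (Set.Ici 0))
    (hg_bdd : ∃ C : ℝ, ∀ u : ℝ, 0 ≤ u → |g u| ≤ C) :
    Filter.Tendsto
      (fun T : ℝ =>
        (1 / Real.sqrt T) *
          Real.sqrt (∫ s in (0:ℝ)..T,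
            (∫ r in T..(T + Δ), (r - s) ^ (H - 1 / 2) * g (r - s)) ^ 2))
      (nhdsWithin 0 (Set.Ioi 0))
      (nhds |∫ u in (0:ℝ)..Δ, u ^ (H - 1 / 2) * g u|) := by
  obtain ⟨C, hC⟩ := hg_bdd
  have hC0 : 0 ≤ C := (abs_nonneg _).trans (hC 0 le_rfl)
  set p : ℝ := H - 1 / 2 with hp_def
  have hp1 : (-1 : ℝ) < p := by rw [hp_def]; linarith
  have hp0 : p < 0 := by rw [hp_def]; linarith
  have hp1' : (0 : ℝ) < p + 1 := by linarith
  set k : ℝ → ℝ := fun u => u ^ p * g u with hk_def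
  -- interval integrability of `k` on `[a,b] ⊆ [0,∞)`
  have hrpow_int : ∀ a b : ℝ, IntervalIntegrable (fun u : ℝ => u ^ p) volume a b :=
    fun a b => intervalIntegral.intervalIntegrable_rpow' hp1
  have hk_int : ∀ a b : ℝ, 0 ≤ a → a ≤ b → IntervalIntegrable k volume a b := by
    intro a b ha hab
    rw [intervalIntegrable_iff_integrableOn_Ioc_of_le hab]
    have hdom : IntegrableOn (fun u : ℝ => C * u ^ p) (Ioc a b) volume := by
      have := (hrpow_int a b).const_mul C
      rwa [intervalIntegrable_iff_integrableOn_Ioc_of_le hab] at this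
    refine hdom.integrable.mono ?_ ?_
    · have hcont : ContinuousOn k (Ioc a b) := by
        apply ContinuousOn.mul
        · exact ContinuousOn.rpow_const continuousOn_id
            (fun x hx => Or.inl (ne_of_gt (lt_of_le_of_lt ha hx.1)))
        · exact hg_cont.mono (fun x hx => le_trans ha hx.1.le)
      exact hcont.aestronglyMeasurable measurableSet_Ioc
    · filter_upwards [ae_restrict_mem measurableSet_Ioc] with u hu
      have hu0 : 0 < u := lt_of_le_of_lt ha hu.1
      have hupow : (0:ℝ) ≤ u ^ p := Real.rpow_nonneg hu0.le p
      simp only [Real.norm_eq_abs, hk_def, abs_mul, abs_of_nonneg hupow]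
      calc u ^ p * |g u| ≤ u ^ p * C :=
            mul_le_mul_of_nonneg_left (hC u hu0.le) hupow
        _ = |C| * u ^ p := by rw [abs_of_nonneg hC0]; ring
  set Φ : ℝ → ℝ := fun x => ∫ u in (0:ℝ)..x, k u with hΦ_def
  set L : ℝ := Φ Δ with hL_def
  -- bound near 0
  have hΦ0 : ∀ t : ℝ, 0 ≤ t → |Φ t| ≤ C * t ^ (p + 1) / (p + 1) := by
    intro t ht
    calc |Φ t| ≤ ∫ u in (0:ℝ)..t, |k u| :=
          intervalIntegral.abs_integral_le_integral_abs ht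
      _ ≤ ∫ u in (0:ℝ)..t, C * u ^ p := by
          refine intervalIntegral.integral_mono_on ht (hk_int 0 t le_rfl ht).abs
            ((hrpow_int 0 t).const_mul C) (fun u hu => ?_)
          have hupow : (0:ℝ) ≤ u ^ p := Real.rpow_nonneg hu.1 p
          rcases eq_or_lt_of_le hu.1 with h0 | h0
          · simp [hk_def, ← h0, Real.zero_rpow (ne_of_lt hp0)]
          · calc |u ^ p * g u| = u ^ p * |g u| := by
                  rw [abs_mul, abs_of_nonneg hupow]
              _ ≤ u ^ p * C := mul_le_mul_of_nonneg_left (hC u h0.le) hupow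
              _ = C * u ^ p := mul_comm _ _
      _ = C * ((t ^ (p + 1) - 0 ^ (p + 1)) / (p + 1)) := by
          rw [intervalIntegral.integral_const_mul, integral_rpow (Or.inl hp1)]
      _ = C * t ^ (p + 1) / (p + 1) := by
          rw [Real.zero_rpow (ne_of_gt hp1')]; ring
  -- bound near Δ
  have hΦΔ : ∀ t : ℝ, 0 ≤ t → |Φ (Δ + t) - Φ Δ| ≤ C * Δ ^ p * t := by
    intro t ht
    have hΔt : Δ ≤ Δ + t := by linarith
    have h1 : Φ (Δ + t) - Φ Δ = ∫ u in Δ..(Δ + t), k u :=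
      intervalIntegral.integral_interval_sub_left
        (hk_int 0 (Δ + t) le_rfl (by linarith)) (hk_int 0 Δ le_rfl hΔ.le)
    rw [h1]
    calc |∫ u in Δ..(Δ + t), k u| ≤ ∫ u in Δ..(Δ + t), |k u| :=
          intervalIntegral.abs_integral_le_integral_abs hΔt
      _ ≤ ∫ _u in Δ..(Δ + t), C * Δ ^ p := by
          refine intervalIntegral.integral_mono_on hΔt (hk_int Δ (Δ + t) hΔ.le hΔt).abs
            intervalIntegrable_const (fun u hu => ?_)
          have hu0 : 0 < u := lt_of_lt_of_le hΔ hu.1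
          have hupow : (0:ℝ) ≤ u ^ p := Real.rpow_nonneg hu0.le p
          calc |u ^ p * g u| = u ^ p * |g u| := by rw [abs_mul, abs_of_nonneg hupow]
            _ ≤ u ^ p * C := mul_le_mul_of_nonneg_left (hC u hu0.le) hupow
            _ ≤ Δ ^ p * C :=
                mul_le_mul_of_nonneg_right (Real.rpow_le_rpow_of_nonpos hΔ hu.1 hp0.le) hC0
            _ = C * Δ ^ p := mul_comm _ _
      _ = C * Δ ^ p * t := by
          rw [intervalIntegral.integral_const, smul_eq_mul]; ring
  -- the error function
  set e : ℝ → ℝ := fun T => C * T ^ (p + 1) / (p + 1) + C * Δ ^ p * T with he_def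
  have he_nonneg : ∀ T : ℝ, 0 ≤ T → 0 ≤ e T := by
    intro T hT
    have h1 : (0:ℝ) ≤ T ^ (p + 1) := Real.rpow_nonneg hT _
    have h2 : (0:ℝ) ≤ Δ ^ p := Real.rpow_nonneg hΔ.le _
    rw [he_def]
    positivity
  have he_tendsto : Tendsto e (nhdsWithin 0 (Set.Ioi 0)) (nhds 0) := by
    have h1 : Tendsto (fun T : ℝ => T ^ (p + 1)) (nhds 0) (nhds 0) := by
      have := (Real.continuousAt_rpow_const 0 (p + 1) (Or.inr hp1'.le))
      simpa [Real.zero_rpow (ne_of_gt hp1')] using this.tendsto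
    have h2 : Tendsto e (nhds 0) (nhds (C * (0:ℝ) / (p + 1) + C * Δ ^ p * 0)) := by
      exact (((h1.const_mul C).div_const (p + 1)).add
        ((continuous_id.tendsto 0).const_mul (C * Δ ^ p)))
    have h2' : Tendsto e (nhds 0) (nhds 0) := by simpa using h2
    exact h2'.mono_left nhdsWithin_le_nhds
  -- the main pointwise estimate
  have key : ∀ T : ℝ, 0 < T →
      dist ((1 / Real.sqrt T) *
          Real.sqrt (∫ s in (0:ℝ)..T,
            (∫ r in T..(T + Δ), (r - s) ^ p * g (r - s)) ^ 2)) |L| ≤ e T := by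
    intro T hT
    set F : ℝ → ℝ := fun s => Φ (T + Δ - s) - Φ (T - s) with hF_def
    -- rewrite the inner integral
    have hinner : ∀ s ∈ Set.Icc (0:ℝ) T,
        (∫ r in T..(T + Δ), (r - s) ^ p * g (r - s)) = F s := by
      intro s hs
      have h1 : (∫ r in T..(T + Δ), (r - s) ^ p * g (r - s))
          = ∫ u in (T - s)..(T + Δ - s), k u :=
        intervalIntegral.integral_comp_sub_right k s
      have h2 : 0 ≤ T - s := by linarith [hs.2]
      have h3 : T - s ≤ T + Δ - s := by linarith
      rw [h1, ← intervalIntegral.integral_interval_sub_left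
        (hk_int 0 (T + Δ - s) le_rfl (by linarith)) (hk_int 0 (T - s) le_rfl h2)]
    have houter : (∫ s in (0:ℝ)..T,
        (∫ r in T..(T + Δ), (r - s) ^ p * g (r - s)) ^ 2) = ∫ s in (0:ℝ)..T, (F s) ^ 2 := by
      refine intervalIntegral.integral_congr (fun s hs => ?_)
      rw [Set.uIcc_of_le hT.le] at hs
      rw [hinner s hs]
    rw [houter]
    -- continuity and integrability of F²
    have hΦcont : ContinuousOn Φ (Set.Icc 0 (T + Δ)) := by
      have hint : IntegrableOn k (Set.uIcc 0 (T + Δ)) volume := by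
        rw [Set.uIcc_of_le (by linarith : (0:ℝ) ≤ T + Δ),
          integrableOn_Icc_iff_integrableOn_Ioc]
        exact (intervalIntegrable_iff_integrableOn_Ioc_of_le
          (by linarith : (0:ℝ) ≤ T + Δ)).mp (hk_int 0 (T + Δ) le_rfl (by linarith))
      have := intervalIntegral.continuousOn_primitive_interval hint
      rwa [Set.uIcc_of_le (by linarith : (0:ℝ) ≤ T + Δ)] at this
    have hFcont : ContinuousOn F (Set.Icc 0 T) := by
      refine ContinuousOn.sub ?_ ?_
      · refine hΦcont.comp (Continuous.continuousOn (by continuity)) (fun s hs => ?_)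
        exact ⟨by linarith [hs.2], by linarith [hs.1]⟩
      · refine hΦcont.comp (Continuous.continuousOn (by continuity)) (fun s hs => ?_)
        exact ⟨by linarith [hs.2], by linarith [hs.1]⟩
    have hF2int : IntervalIntegrable (fun s => (F s) ^ 2) volume 0 T := by
      apply ContinuousOn.intervalIntegrable
      rw [Set.uIcc_of_le hT.le]
      exact hFcont.pow 2
    -- pointwise bound on F
    have hFbd : ∀ s ∈ Set.Icc (0:ℝ) T, |F s - L| ≤ e T := by
      intro s hs
      have h2 : 0 ≤ T - s := by linarith [hs.2]
      have h4 : T + Δ - s = Δ + (T - s) := by ring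
      have hb1 : |Φ (T + Δ - s) - Φ Δ| ≤ C * Δ ^ p * T := by
        rw [h4]
        refine (hΦΔ (T - s) h2).trans ?_
        have hnn : (0:ℝ) ≤ C * Δ ^ p := mul_nonneg hC0 (Real.rpow_nonneg hΔ.le p)
        exact mul_le_mul_of_nonneg_left (by linarith [hs.1]) hnn
      have hb2 : |Φ (T - s)| ≤ C * T ^ (p + 1) / (p + 1) := by
        refine (hΦ0 (T - s) h2).trans ?_
        have hmono : (T - s) ^ (p + 1) ≤ T ^ (p + 1) :=
          Real.rpow_le_rpow h2 (by linarith [hs.1]) hp1'.le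
        gcongr
      calc |F s - L| = |(Φ (T + Δ - s) - Φ Δ) - Φ (T - s)| := by
            rw [hF_def, hL_def]; ring_nf
        _ ≤ |Φ (T + Δ - s) - Φ Δ| + |Φ (T - s)| := abs_sub _ _
        _ ≤ C * Δ ^ p * T + C * T ^ (p + 1) / (p + 1) := add_le_add hb1 hb2
        _ = e T := by rw [he_def]; ring
    -- squeezing the averaged square
    set lo : ℝ := max (|L| - e T) 0 with hlo_def
    set hi : ℝ := |L| + e T with hhi_def
    have hlo0 : 0 ≤ lo := le_max_right _ _
    have hhi0 : 0 ≤ hi := add_nonneg (abs_nonneg _) (he_nonneg T hT.le)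
    have hsq : ∀ s ∈ Set.Icc (0:ℝ) T, lo ^ 2 ≤ (F s) ^ 2 ∧ (F s) ^ 2 ≤ hi ^ 2 := by
      intro s hs
      have h1 : |F s| ≤ hi := by
        have := hFbd s hs
        rw [hhi_def]
        calc |F s| ≤ |L| + |F s - L| := by
              have := abs_sub_abs_le_abs_sub (F s) L
              have h := abs_sub_le (F s) L 0
              simp only [sub_zero] at h
              linarith
          _ ≤ |L| + e T := by linarith
      have h2 : lo ≤ |F s| := by
        refine max_le ?_ (abs_nonneg _)
        have h := abs_sub_abs_le_abs_sub L (F s)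
        have h' : |L - F s| = |F s - L| := abs_sub_comm _ _
        have := hFbd s hs
        linarith
      constructor
      · calc lo ^ 2 ≤ |F s| ^ 2 := pow_le_pow_left₀ hlo0 h2 2
          _ = (F s) ^ 2 := sq_abs _
      · calc (F s) ^ 2 = |F s| ^ 2 := (sq_abs _).symm
          _ ≤ hi ^ 2 := pow_le_pow_left₀ (abs_nonneg _) h1 2
    -- integral bounds
    have hXlo : T * lo ^ 2 ≤ ∫ s in (0:ℝ)..T, (F s) ^ 2 := by
      have h := intervalIntegral.integral_mono_on hT.le
        (intervalIntegrable_const (c := lo ^ 2)) hF2int (fun s hs => (hsq s hs).1)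
      rwa [intervalIntegral.integral_const, smul_eq_mul, sub_zero] at h
    have hXhi : (∫ s in (0:ℝ)..T, (F s) ^ 2) ≤ T * hi ^ 2 := by
      have h := intervalIntegral.integral_mono_on hT.le hF2int
        (intervalIntegrable_const (c := hi ^ 2)) (fun s hs => (hsq s hs).2)
      rwa [intervalIntegral.integral_const, smul_eq_mul, sub_zero] at h
    obtain ⟨X, hX_def⟩ : ∃ X : ℝ, X = ∫ s in (0:ℝ)..T, (F s) ^ 2 := ⟨_, rfl⟩
    rw [← hX_def] at hXlo hXhi ⊢
    have hX0 : 0 ≤ X := le_trans (by positivity) hXlo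
    have hval : (1 / Real.sqrt T) * Real.sqrt X = Real.sqrt (X / T) := by
      rw [Real.sqrt_div hX0, one_div, inv_mul_eq_div]
    have hdivlo : lo ^ 2 ≤ X / T := (le_div_iff₀ hT).mpr (by linarith [hXlo])
    have hdivhi : X / T ≤ hi ^ 2 := (div_le_iff₀ hT).mpr (by linarith [hXhi])
    have hs_lo : lo ≤ Real.sqrt (X / T) := by
      calc lo = Real.sqrt (lo ^ 2) := (Real.sqrt_sq hlo0).symm
        _ ≤ Real.sqrt (X / T) := Real.sqrt_le_sqrt hdivlo
    have hs_hi : Real.sqrt (X / T) ≤ hi := by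
      calc Real.sqrt (X / T) ≤ Real.sqrt (hi ^ 2) := Real.sqrt_le_sqrt hdivhi
        _ = hi := Real.sqrt_sq hhi0
    rw [Real.dist_eq, hval]
    rw [abs_sub_le_iff]
    constructor
    · have : Real.sqrt (X / T) ≤ |L| + e T := hs_hi
      linarith
    · have h6 : |L| - e T ≤ lo := by rw [hlo_def]; exact le_max_left _ _
      have h7 : |L| - e T ≤ Real.sqrt (X / T) := le_trans h6 hs_lo
      clear_value lo hi
      linarith
  -- conclude by squeezing
  rw [tendsto_iff_dist_tendsto_zero]
  refine squeeze_zero' (Filter.Eventually.of_forall (fun t => dist_nonneg)) ?_ he_tendsto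
  filter_upwards [self_mem_nhdsWithin] with T hT
  exact key T hT
end

section
/- Let H ∈ (0, 1/2], β ≥ 0 and Δ > 0. Define K(T, t) = ∫_T^{T+Δ} (r−t)^{H−1/2} e^{−β(r−t)} dr for 0 ≤ t ≤ T, and J = ∫_0^Δ u^{H−1/2} e^{−βu} du. Then lim_{T→0⁺} (1/T²) · ∫_0^T K(T,s)² ( ∫_s^T K(T,u)² du ) ds = J⁴ / 2. -/
open Real MeasureTheory Filter Set

/-- with `K(T,t) = ∫_T^{T+Δ} (r−t)^{H−1/2} e^{−β(r−t)} dr` and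
`J = ∫₀^Δ u^{H−1/2} e^{−βu} du`, one has
`(1/T²) ∫₀^T K(T,s)² (∫ₛ^T K(T,u)² du) ds → J⁴/2` as `T → 0⁺`. -/
theorem VIX_skew_B_term_limit (H β Δ : ℝ) (hH1 : 0 < H) (hH2 : H ≤ 1 / 2)
    (hβ : 0 ≤ β) (hΔ : 0 < Δ)
    (K : ℝ → ℝ → ℝ)
    (hK : ∀ T t : ℝ, K T t = ∫ r in T..(T + Δ), (r - t) ^ (H - 1 / 2) *
      Real.exp (-β * (r - t)))
    (J : ℝ) (hJ : J = ∫ u in (0:ℝ)..Δ, u ^ (H - 1 / 2) * Real.exp (-β * u)) :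
    Filter.Tendsto
      (fun T : ℝ =>
        (1 / T ^ 2) * ∫ s in (0:ℝ)..T, (K T s) ^ 2 * ∫ u in s..T, (K T u) ^ 2)
      (nhdsWithin 0 (Set.Ioi 0)) (nhds (J ^ 4 / 2)) := by
  set f : ℝ → ℝ := fun u => u ^ (H - 1 / 2) * Real.exp (-β * u) with hf
  have hfint : ∀ a b : ℝ, IntervalIntegrable f volume a b := by
    intro a b
    exact (intervalIntegral.intervalIntegrable_rpow' (by linarith)).mul_continuousOn
      (Continuous.continuousOn (by continuity))
  set F : ℝ → ℝ := fun a => ∫ u in a..(a + Δ), f u with hF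
  have hFsplit : ∀ a : ℝ, F a = (∫ u in (0:ℝ)..(a + Δ), f u) - ∫ u in (0:ℝ)..a, f u := by
    intro a
    rw [eq_sub_iff_add_eq, add_comm]
    exact intervalIntegral.integral_add_adjacent_intervals (hfint 0 a) (hfint a (a + Δ))
  have hFcont : Continuous F := by
    have h1 : Continuous fun x : ℝ => ∫ u in (0:ℝ)..x, f u :=
      intervalIntegral.continuous_primitive hfint 0
    have : Continuous fun a : ℝ =>
        (∫ u in (0:ℝ)..(a + Δ), f u) - ∫ u in (0:ℝ)..a, f u :=
      (h1.comp (continuous_id.add continuous_const)).sub h1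
    exact this.congr fun a => (hFsplit a).symm
  have hF0 : F 0 = J := by
    simp only [hF, zero_add]
    exact hJ.symm
  set G : ℝ → ℝ := fun a => F a ^ 2 with hG
  have hGcont : Continuous G := hFcont.pow 2
  set Ψ : ℝ → ℝ := fun x => ∫ a in (0:ℝ)..x, G a with hΨ
  have hΨderiv : ∀ x : ℝ, HasDerivAt Ψ (G x) x := fun x =>
    intervalIntegral.integral_hasDerivAt_right (hGcont.intervalIntegrable 0 x)
      (hGcont.aestronglyMeasurable.stronglyMeasurableAtFilter) hGcont.continuousAt
  have hΨ0 : Ψ 0 = 0 := by simp [hΨ]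
  have hKF : ∀ T t : ℝ, K T t = F (T - t) := by
    intro T t
    rw [hK]
    have h := intervalIntegral.integral_comp_sub_right (a := T) (b := T + Δ) f t
    simp only [hf] at h
    rw [h, show T + Δ - t = T - t + Δ from by ring]
  have key : ∀ T : ℝ, (∫ s in (0:ℝ)..T, (K T s) ^ 2 * ∫ u in s..T, (K T u) ^ 2)
      = Ψ T ^ 2 / 2 := by
    intro T
    have hinner : ∀ s : ℝ, (∫ u in s..T, (K T u) ^ 2) = Ψ (T - s) := by
      intro s
      simp only [hKF]
      have h := intervalIntegral.integral_comp_sub_left (a := s) (b := T)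
        (fun a => F a ^ 2) T
      beta_reduce at h
      rw [h, sub_self]
    have houter : (∫ s in (0:ℝ)..T, (K T s) ^ 2 * ∫ u in s..T, (K T u) ^ 2)
        = ∫ a in (0:ℝ)..T, G a * Ψ a := by
      simp only [hinner]
      simp only [hKF]
      have h := intervalIntegral.integral_comp_sub_left (a := (0:ℝ)) (b := T)
        (fun a => F a ^ 2 * Ψ a) T
      beta_reduce at h
      rw [h, sub_self, sub_zero]
    rw [houter]
    have hftc : (∫ a in (0:ℝ)..T, G a * Ψ a) = Ψ T ^ 2 / 2 - Ψ 0 ^ 2 / 2 := by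
      apply intervalIntegral.integral_eq_sub_of_hasDerivAt
      · intro x _
        have : HasDerivAt (fun T => Ψ T ^ 2 / 2) (((2:ℕ):ℝ) * Ψ x ^ (2 - 1) * G x / 2) x :=
          ((hΨderiv x).fun_pow 2).div_const 2
        exact this.congr_deriv (by push_cast; ring)
      · exact ((hGcont.mul (intervalIntegral.continuous_primitive
          (fun a b => hGcont.intervalIntegrable a b) 0))).intervalIntegrable 0 T
    rw [hftc, hΨ0]
    ring
  have hslope : Tendsto (fun T : ℝ => Ψ T / T) (nhdsWithin 0 (Set.Ioi 0)) (nhds (J ^ 2)) := by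
    have h := hasDerivAt_iff_tendsto_slope.mp (hΨderiv 0)
    have h2 : Tendsto (slope Ψ 0) (nhdsWithin 0 (Set.Ioi 0)) (nhds (G 0)) :=
      h.mono_left (nhdsWithin_mono 0 (fun x hx => ne_of_gt hx))
    have hG0 : G 0 = J ^ 2 := by rw [hG]; simp only; rw [hF0]
    rw [hG0] at h2
    refine h2.congr fun x => ?_
    simp [slope_def_field, hΨ0, div_eq_div_iff]
  have hfinal : Tendsto (fun T : ℝ => (Ψ T / T) ^ 2 / 2)
      (nhdsWithin 0 (Set.Ioi 0)) (nhds (J ^ 4 / 2)) := by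
    have : (J ^ 4 : ℝ) = (J ^ 2) ^ 2 := by ring
    rw [this]
    exact (hslope.pow 2).div_const 2
  refine hfinal.congr' ?_
  filter_upwards [self_mem_nhdsWithin] with T hT
  have hT0 : T ≠ 0 := ne_of_gt hT
  rw [key T]
  field_simp
end
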